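/- Let 𝒰 be an ultrafilter on ℕ and let p : ℕ → ℕ be a sequence of prime numbers which is an infinite prime relative to 𝒰 (i.e. for every natural number q the set {m | p m = q} is not in 𝒰). Then the quotient ring (∏_{m∈ℕ} ℤ) ⧸ (p,𝒰) has characteristic zero. -/

import Mathlib

def pUIdeal (𝒰 : Ultrafilter ℕ) (p : ℕ → ℕ) : Ideal (ℕ → ℤ) where
  carrier := {a | {m | (p m : ℤ) ∣ a m} ∈ 𝒰}
  zero_mem' := by
    simp only [Set.mem_setOf_eq, Pi.zero_apply, dvd_zero, Set.setOf_true]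
    exact Filter.univ_mem
  add_mem' := by
    intro a b ha hb
    have := Filter.inter_mem ha hb
    refine Filter.mem_of_superset this ?_
    rintro m ⟨h1, h2⟩
    exact dvd_add h1 h2
  smul_mem' := by
    intro c a ha
    refine Filter.mem_of_superset ha ?_
    intro m hm
    exact Dvd.dvd.mul_left hm (c m)

/-- If `p` is an infinite prime relative to the ultrafilter `𝒰`, then the nonstandard residue
field `(∏ ℤ) ⧸ (p, 𝒰)` has characteristic zero. -/
theorem residueField_charZero (𝒰 : Ultrafilter ℕ) (p : ℕ → ℕ)
    (hp : ∀ m, (p m).Prime) (hinf : ∀ q : ℕ, {m | p m = q} ∉ 𝒰) :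
    CharZero ((ℕ → ℤ) ⧸ pUIdeal 𝒰 p) := by
  apply charZero_of_inj_zero
  intro n hn
  by_contra hne
  have hmem : ((n : ℕ → ℤ)) ∈ pUIdeal 𝒰 p := by
    have h0 : Ideal.Quotient.mk (pUIdeal 𝒰 p) ((n : ℕ → ℤ)) = 0 := by
      rw [map_natCast]; exact hn
    exact Ideal.Quotient.eq_zero_iff_mem.mp h0
  have hmem' : {m | (p m : ℤ) ∣ (n : ℤ)} ∈ 𝒰 := by
    simpa [Pi.natCast_apply] using (show {m | (p m : ℤ) ∣ (n : ℕ → ℤ) m} ∈ 𝒰 from hmem)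
  have hsub : {m | (p m : ℤ) ∣ (n : ℤ)} ⊆ ⋃ q ∈ Finset.range (n+1), {m | p m = q} := by
    intro m hm
    have hdvd : p m ∣ n := Int.ofNat_dvd.mp hm
    have : p m < n + 1 := Nat.lt_succ_of_le (Nat.le_of_dvd (Nat.pos_of_ne_zero hne) hdvd)
    simp only [Set.mem_iUnion, Finset.mem_range]
    exact ⟨p m, this, rfl⟩
  have hU : (⋃ q ∈ Finset.range (n+1), {m | p m = q}) ∈ 𝒰 :=
    Filter.mem_of_superset hmem' hsub
  obtain ⟨q, _, hq⟩ := (Ultrafilter.finite_biUnion_mem_iff (Finset.finite_toSet _)).mp hU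
  exact hinf q hq
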